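/- Every law-invariant coherent risk estimator ρ̂: ℝ^n → ℝ admits a discrete Kusuoka representation: there exists a nonempty convex set 𝓜 ⊆ Δ_n such that ρ̂(x) = sup_{μ∈𝓜} ∑_{k=1}^n μ_k · dES_{k/n}(x) for all x ∈ ℝ^n, with the supremum attained. -/

import Mathlib

/-- The `i`-th order statistic (`i`-th smallest coordinate, `i = 1,…,n`) of `x ∈ ℝ^n`. -/
noncomputable def orderStat {n : ℕ} (x : Fin n → ℝ) (i : ℕ) : ℝ :=
  ((Finset.univ.val.map x).sort (· ≤ ·)).getD (i - 1) 0

/-- Discrete expected shortfall at level `k/n`: `-(1/k) ∑_{i=1}^k x_{i:n}`. -/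
noncomputable def dES {n : ℕ} (k : ℕ) (x : Fin n → ℝ) : ℝ :=
  -(1 / (k : ℝ)) * ∑ i ∈ Finset.Icc 1 k, orderStat x i

/- ### Auxiliary lemmas -/

lemma sortList_eq {n : ℕ} (x : Fin n → ℝ) :
    (Finset.univ.val.map x).sort (· ≤ ·) = List.ofFn (x ∘ Tuple.sort x) := by
  have hperm : ((Finset.univ.val.map x).sort (· ≤ ·)).Perm (List.ofFn (x ∘ Tuple.sort x)) := by
    rw [← Multiset.coe_eq_coe, Multiset.sort_eq, List.ofFn_eq_map]
    have huniv : (Finset.univ : Finset (Fin n)).val = ↑(List.finRange n) := rfl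
    rw [huniv, ← Multiset.map_coe]
    have : Multiset.map (⇑(Tuple.sort x)) ↑(List.finRange n) = ↑(List.finRange n) := by
      have := Finset.map_univ_equiv (Tuple.sort x)
      have := congrArg Finset.val this
      simpa [Finset.map, huniv] using this
    conv_lhs => rw [← this]
    rw [Multiset.map_map]
  exact List.Perm.eq_of_pairwise' (Multiset.pairwise_sort _ _)
    (Tuple.monotone_sort x).sortedLE_ofFn.pairwise hperm

lemma orderStat_succ {n : ℕ} (x : Fin n → ℝ) (i : Fin n) :
    orderStat x (i + 1) = x (Tuple.sort x i) := by
  unfold orderStat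
  rw [sortList_eq]
  simp only [Nat.add_sub_cancel]
  rw [List.getD_eq_getElem _ _ (by simp [i.isLt])]
  simp

/-- ℕ-indexed sorted values (0 beyond the range). -/
noncomputable def os {n : ℕ} (x : Fin n → ℝ) (j : ℕ) : ℝ := orderStat x (j + 1)

lemma os_eq {n : ℕ} (x : Fin n → ℝ) (j : ℕ) (h : j < n) :
    os x j = x (Tuple.sort x ⟨j, h⟩) := orderStat_succ x ⟨j, h⟩

lemma orderStat_zero {n : ℕ} (i : ℕ) : orderStat (fun _ : Fin n => (0 : ℝ)) i = 0 := by
  unfold orderStat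
  set L := (Finset.univ.val.map (fun _ : Fin n => (0 : ℝ))).sort (· ≤ ·) with hL
  have hmem : ∀ z ∈ L, z = 0 := by
    intro z hz
    have : z ∈ Finset.univ.val.map (fun _ : Fin n => (0 : ℝ)) := by
      rw [← Multiset.sort_eq (Finset.univ.val.map (fun _ : Fin n => (0 : ℝ))) (· ≤ ·)]
      exact_mod_cast hz
    obtain ⟨a, -, ha⟩ := Multiset.mem_map.mp this
    exact ha.symm
  rcases Nat.lt_or_ge (i - 1) L.length with h | h
  · rw [List.getD_eq_getElem _ _ h]
    exact hmem _ (List.getElem_mem h)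
  · exact List.getD_eq_default _ _ h

lemma icc_shift (m : ℕ) (f : ℕ → ℝ) :
    ∑ i ∈ Finset.Icc 1 m, f i = ∑ j ∈ Finset.range m, f (j + 1) := by
  induction m with
  | zero => simp
  | succ m ih =>
    rw [Finset.sum_Icc_succ_top (by omega), ih, Finset.sum_range_succ]

lemma abel_sum (a s : ℕ → ℝ) (m : ℕ) :
    ∑ k ∈ Finset.range m, (a k - a (k + 1)) * (∑ j ∈ Finset.range (k + 1), s j)
      = ∑ j ∈ Finset.range m, a j * s j - a m * ∑ j ∈ Finset.range m, s j := by
  induction m with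
  | zero => simp
  | succ m ih =>
    rw [Finset.sum_range_succ, ih, Finset.sum_range_succ (f := fun j => a j * s j),
      Finset.sum_range_succ (f := s)]
    ring

lemma abel_sum' (a : ℕ → ℝ) (m : ℕ) :
    ∑ k ∈ Finset.range m, ((k : ℝ) + 1) * (a (k + 1) - a k)
      = (m : ℝ) * a m - ∑ k ∈ Finset.range m, a k := by
  induction m with
  | zero => simp
  | succ m ih =>
    rw [Finset.sum_range_succ, ih, Finset.sum_range_succ (f := a)]
    push_cast
    ring

lemma dES_eq_os {n : ℕ} (k : ℕ) (y : Fin n → ℝ) :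
    dES (k + 1) y = -(1 / ((k : ℝ) + 1)) * ∑ j ∈ Finset.range (k + 1), os y j := by
  unfold dES
  rw [icc_shift]
  push_cast
  rfl

lemma rep_eq {n : ℕ} (a : ℕ → ℝ) (ha : a n = 0) (y : Fin n → ℝ) :
    ∑ k : Fin n, (((k : ℕ) : ℝ) + 1) * (a ((k : ℕ) + 1) - a (k : ℕ)) * dES ((k : ℕ) + 1) y
      = ∑ j ∈ Finset.range n, a j * os y j := by
  rw [Fin.sum_univ_eq_sum_range (fun k => ((k : ℝ) + 1) * (a (k + 1) - a k) * dES (k + 1) y) n]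
  have hterm : ∀ k : ℕ, ((k : ℝ) + 1) * (a (k + 1) - a k) * dES (k + 1) y
      = (a k - a (k + 1)) * ∑ j ∈ Finset.range (k + 1), os y j := by
    intro k
    rw [dES_eq_os]
    have hk : (k : ℝ) + 1 ≠ 0 := by positivity
    field_simp
    ring
  simp_rw [hterm]
  rw [abel_sum, ha]
  ring

/-- Discrete Kusuoka representation: every law-invariant coherent risk
estimator is the attained supremum over a nonempty convex set of mixtures of discrete
expected shortfalls at the grid levels `k/n`, `k = 1,…,n`. -/
theorem discrete_kusuoka_representation (n : ℕ) (ρ : (Fin n → ℝ) → ℝ)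
    (h_mono : ∀ x y : Fin n → ℝ, (∀ i, x i ≤ y i) → ρ y ≤ ρ x)
    (h_cash : ∀ (x : Fin n → ℝ) (m : ℝ), ρ (fun i => x i + m) = ρ x - m)
    (h_hom : ∀ (x : Fin n → ℝ) (l : ℝ), 0 ≤ l → ρ (fun i => l * x i) = l * ρ x)
    (h_sub : ∀ x y : Fin n → ℝ, ρ (fun i => x i + y i) ≤ ρ x + ρ y)
    (h_law : ∀ (x : Fin n → ℝ) (σ : Equiv.Perm (Fin n)), ρ (x ∘ σ) = ρ x) :
    ∃ 𝓜 : Set (Fin n → ℝ), 𝓜.Nonempty ∧ Convex ℝ 𝓜 ∧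
      (∀ μ ∈ 𝓜, (∀ k, 0 ≤ μ k) ∧ ∑ k, μ k = 1) ∧
      ∀ x : Fin n → ℝ, ∃ μ ∈ 𝓜,
        ρ x = ∑ k : Fin n, μ k * dES (k + 1) x ∧
          ∀ ν ∈ 𝓜, ∑ k : Fin n, ν k * dES (k + 1) x ≤ ρ x := by
  classical
  -- the degenerate case n = 0 contradicts cash invariance
  rcases Nat.eq_zero_or_pos n with hn | hn
  · exfalso
    subst hn
    have h := h_cash (fun _ => 0) 1
    have heq : (fun i : Fin 0 => (fun _ : Fin 0 => (0:ℝ)) i + 1) = (fun _ : Fin 0 => (0:ℝ)) :=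
      funext fun i => i.elim0
    rw [heq] at h
    linarith
  -- basic consequences of the axioms
  have hρ0 : ρ (fun _ => 0) = 0 := by
    have := h_hom (fun _ => 0) 0 le_rfl
    simpa using this
  -- the candidate set
  set 𝓜 : Set (Fin n → ℝ) :=
    {μ | (∀ k, 0 ≤ μ k) ∧ (∑ k, μ k = 1) ∧
      ∀ y : Fin n → ℝ, ∑ k : Fin n, μ k * dES ((k : ℕ) + 1) y ≤ ρ y} with h𝓜
  -- key construction: supporting mixture at any nonzero point
  have key : ∀ x : Fin n → ℝ, x ≠ 0 → ∃ μ ∈ 𝓜,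
      ∑ k : Fin n, μ k * dES ((k : ℕ) + 1) x = ρ x := by
    intro x hx
    set τx := Tuple.sort x with hτx
    set xs : Fin n → ℝ := x ∘ ⇑τx with hxs_def
    have hxs : xs ≠ 0 := by
      intro h0
      apply hx
      funext i
      have : xs (τx.symm i) = 0 := by rw [h0]; rfl
      simpa [hxs_def] using this
    have hρxs : ρ xs = ρ x := h_law x τx
    -- the partial linear functional on the span of xs
    set f : (Fin n → ℝ) →ₗ.[ℝ] ℝ := LinearPMap.mkSpanSingleton xs (ρ xs) hxs with hf_def
    have hf_le : ∀ z : f.domain, f z ≤ ρ z := by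
      rintro ⟨z, hz⟩
      rcases Submodule.mem_span_singleton.mp hz with ⟨c, hc⟩
      have hfz : f ⟨z, hz⟩ = c * ρ xs := by
        have hz_eq : (⟨z, hz⟩ : f.domain) = ⟨c • xs, hc ▸ hz⟩ := by
          apply Subtype.ext; exact hc.symm
        rw [hz_eq]
        exact (LinearPMap.mkSpanSingleton'_apply xs (ρ xs) _ c _).trans (smul_eq_mul ..)
      rw [hfz]
      show c * ρ xs ≤ ρ z
      have hsmul : ∀ t : ℝ, (t • xs) = fun i => t * xs i := fun t => rfl
      rcases le_or_gt 0 c with hc0 | hc0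
      · have := h_hom xs c hc0
        rw [← hc, hsmul c, this]
      · have hneg := h_hom xs (-c) (by linarith)
        have hadd := h_sub (fun i => c * xs i) (fun i => (-c) * xs i)
        have hzero : (fun i => (fun i => c * xs i) i + (fun i => (-c) * xs i) i)
            = (fun _ : Fin n => (0:ℝ)) := by funext i; ring_nf
        rw [hzero, hρ0] at hadd
        rw [← hc, hsmul c]
        rw [hneg] at hadd
        nlinarith [hadd]
    -- Hahn–Banach extension dominated by ρ
    obtain ⟨g, hg_ext, hg_le⟩ := exists_extension_of_le_sublinear f ρ
      (fun c hc y => by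
        have := h_hom y c hc.le
        have hsm : (c • y) = fun i => c * y i := rfl
        rw [hsm, this])
      (fun y z => by
        have := h_sub y z
        have hadd : (y + z) = fun i => y i + z i := rfl
        rw [hadd]; exact this)
      hf_le
    have hgxs : g xs = ρ x := by
      have hmem : xs ∈ f.domain := Submodule.mem_span_singleton_self xs
      have h1 := hg_ext ⟨xs, hmem⟩
      have h2 : f ⟨xs, hmem⟩ = ρ xs := LinearPMap.mkSpanSingleton'_apply_self _ _ _ _
      rw [h1, h2, hρxs]
    -- coordinates of g
    set q : Fin n → ℝ := fun i => g (fun j => if i = j then 1 else 0) with hq_def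
    have g_rep : ∀ y : Fin n → ℝ, g y = ∑ i, y i * q i := by
      intro y
      rw [LinearMap.pi_apply_eq_sum_univ g y]
      simp [hq_def, smul_eq_mul]
    have hq_nonpos : ∀ i, q i ≤ 0 := by
      intro i
      have h1 : g (fun j => if i = j then 1 else 0) ≤ ρ (fun j => if i = j then 1 else 0) :=
        hg_le _
      have h2 : ρ (fun j => if i = j then 1 else 0) ≤ ρ (fun _ => 0) := by
        apply h_mono
        intro j
        by_cases h : i = j <;> simp [h]
      rw [hρ0] at h2
      exact h1.trans h2
    have hq_sum : ∑ i, q i = -1 := by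
      have hone : g (fun _ => (1:ℝ)) = ∑ i, q i := by
        rw [g_rep]; simp
      have hub : g (fun _ => (1:ℝ)) ≤ -1 := by
        have h1 := hg_le (fun _ => (1:ℝ))
        have h2 := h_cash (fun _ => 0) 1
        have he : (fun i : Fin n => (fun _ : Fin n => (0:ℝ)) i + 1) = (fun _ : Fin n => (1:ℝ)) := by
          funext i; ring
        rw [he, hρ0] at h2
        rw [h2] at h1
        linarith
      have hlb : -1 ≤ g (fun _ => (1:ℝ)) := by
        have h1 := hg_le (fun _ => (-1:ℝ))
        have h2 := h_cash (fun _ => 0) (-1)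
        have he : (fun i : Fin n => (fun _ : Fin n => (0:ℝ)) i + (-1)) = (fun _ : Fin n => (-1:ℝ)) := by
          funext i; ring
        rw [he, hρ0] at h2
        rw [h2] at h1
        have hneg : (fun _ : Fin n => (-1:ℝ)) = -(fun _ : Fin n => (1:ℝ)) := rfl
        rw [hneg, map_neg] at h1
        linarith
      linarith [hone ▸ hub, hone ▸ hlb]
    -- sorted coefficients
    set π := Tuple.sort q with hπ
    set a : ℕ → ℝ := fun j => if h : j < n then q (π ⟨j, h⟩) else 0 with ha_def
    have ha_n : a n = 0 := by simp [ha_def]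
    have ha_nonpos : ∀ j, a j ≤ 0 := by
      intro j
      by_cases h : j < n
      · simp only [ha_def, dif_pos h]; exact hq_nonpos _
      · simp [ha_def, h]
    have ha_mono : ∀ j1 j2 : ℕ, j1 ≤ j2 → a j1 ≤ a j2 := by
      intro j1 j2 h12
      by_cases h2 : j2 < n
      · have h1 : j1 < n := lt_of_le_of_lt h12 h2
        simp only [ha_def, dif_pos h1, dif_pos h2]
        exact Tuple.monotone_sort q (show (⟨j1, h1⟩ : Fin n) ≤ ⟨j2, h2⟩ from h12)
      · simp only [ha_def, dif_neg h2]
        exact ha_nonpos j1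
    -- the mixture
    set μ : Fin n → ℝ := fun k => (((k : ℕ) : ℝ) + 1) * (a ((k : ℕ) + 1) - a (k : ℕ)) with hμ_def
    have hμ_nonneg : ∀ k, 0 ≤ μ k := by
      intro k
      apply mul_nonneg (by positivity)
      have := ha_mono (k : ℕ) ((k : ℕ) + 1) (Nat.le_succ _)
      linarith
    have ha_sum : ∑ j ∈ Finset.range n, a j = -1 := by
      rw [← Fin.sum_univ_eq_sum_range a n]
      have : ∀ i : Fin n, a (i : ℕ) = q (π i) := by
        intro i
        simp only [ha_def, dif_pos i.isLt]
      simp_rw [this]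
      rw [Equiv.sum_comp π q]
      exact hq_sum
    have hμ_sum : ∑ k, μ k = 1 := by
      rw [hμ_def]
      rw [Fin.sum_univ_eq_sum_range (fun k => ((k : ℝ) + 1) * (a (k + 1) - a k)) n]
      rw [abel_sum' a n, ha_n, ha_sum]
      ring
    -- the representation: for every y the mixture value is a g-type evaluation
    have hrep : ∀ y : Fin n → ℝ,
        ∑ k : Fin n, μ k * dES ((k : ℕ) + 1) y = ∑ i : Fin n, q (π i) * y (Tuple.sort y i) := by
      intro y
      rw [hμ_def]
      have := rep_eq a ha_n y
      rw [this]
      rw [← Fin.sum_univ_eq_sum_range (fun j => a j * os y j) n]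
      apply Finset.sum_congr rfl
      intro i _
      rw [os_eq y (i : ℕ) i.isLt]
      simp only [ha_def, dif_pos i.isLt]
    have hdom : ∀ y : Fin n → ℝ, ∑ k : Fin n, μ k * dES ((k : ℕ) + 1) y ≤ ρ y := by
      intro y
      rw [hrep y]
      set σ : Equiv.Perm (Fin n) := π.symm.trans (Tuple.sort y) with hσ
      have hsum : ∑ i : Fin n, q (π i) * y (Tuple.sort y i) = ∑ j : Fin n, q j * (y ∘ ⇑σ) j := by
        rw [← Equiv.sum_comp π (fun j => q j * (y ∘ ⇑σ) j)]
        apply Finset.sum_congr rfl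
        intro i _
        simp [hσ, Equiv.trans_apply, Equiv.symm_apply_apply, Function.comp]
      rw [hsum]
      have : ∑ j : Fin n, q j * (y ∘ ⇑σ) j = g (y ∘ ⇑σ) := by
        rw [g_rep (y ∘ ⇑σ)]
        apply Finset.sum_congr rfl
        intro j _
        ring
      rw [this]
      exact (hg_le _).trans (le_of_eq (h_law y σ))
    -- attainment at x
    have hatt : ∑ k : Fin n, μ k * dES ((k : ℕ) + 1) x = ρ x := by
      apply le_antisymm (hdom x)
      rw [hrep x]
      have hmono_xs : Monotone (fun i => x (τx i)) := Tuple.monotone_sort x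
      have hmono_a : Monotone (fun i => q (π i)) := Tuple.monotone_sort q
      have hmv : Monovary (fun i => q (π i)) (fun i => x (τx i)) :=
        hmono_a.monovary hmono_xs
      have hre := hmv.sum_comp_perm_mul_le_sum_mul (σ := π.symm)
      have hlhs : ∑ i : Fin n, q (π (π.symm i)) * x (τx i) = ∑ i : Fin n, q i * xs i := by
        apply Finset.sum_congr rfl
        intro i _
        simp [hxs_def, Function.comp]
      rw [hlhs] at hre
      have hgxs' : ∑ i : Fin n, q i * xs i = ρ x := by
        rw [← hgxs, g_rep xs]
        apply Finset.sum_congr rfl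
        intro i _
        ring
      rw [hgxs'] at hre
      exact hre
    exact ⟨μ, ⟨hμ_nonneg, hμ_sum, hdom⟩, hatt⟩
  -- a distinguished element of 𝓜
  have hone_ne : (fun _ : Fin n => (1:ℝ)) ≠ 0 := by
    intro h
    have := congrFun h ⟨0, hn⟩
    norm_num at this
  obtain ⟨μ₀, hμ₀, -⟩ := key (fun _ => (1:ℝ)) hone_ne
  refine ⟨𝓜, ⟨μ₀, hμ₀⟩, ?_, fun μ hμ => ⟨hμ.1, hμ.2.1⟩, ?_⟩
  · -- convexity
    rintro μ hμ ν hν s t hs ht hst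
    refine ⟨fun k => add_nonneg (mul_nonneg hs (hμ.1 k)) (mul_nonneg ht (hν.1 k)), ?_, ?_⟩
    · simp only [Pi.add_apply, Pi.smul_apply, smul_eq_mul]
      rw [Finset.sum_add_distrib, ← Finset.mul_sum, ← Finset.mul_sum, hμ.2.1, hν.2.1]
      simpa using hst
    · intro y
      have h1 := hμ.2.2 y
      have h2 := hν.2.2 y
      have : ∑ k : Fin n, (s • μ + t • ν) k * dES ((k : ℕ) + 1) y
          = s * ∑ k : Fin n, μ k * dES ((k : ℕ) + 1) y
            + t * ∑ k : Fin n, ν k * dES ((k : ℕ) + 1) y := by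
        rw [Finset.mul_sum, Finset.mul_sum, ← Finset.sum_add_distrib]
        apply Finset.sum_congr rfl
        intro k _
        simp only [Pi.add_apply, Pi.smul_apply, smul_eq_mul]
        ring
      rw [this]
      calc s * ∑ k : Fin n, μ k * dES ((k : ℕ) + 1) y
            + t * ∑ k : Fin n, ν k * dES ((k : ℕ) + 1) y
          ≤ s * ρ y + t * ρ y := by
            apply add_le_add (mul_le_mul_of_nonneg_left h1 hs) (mul_le_mul_of_nonneg_left h2 ht)
        _ = ρ y := by rw [← add_mul, hst, one_mul]
  · -- the representation with attainment
    intro x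
    by_cases hx : x = 0
    · refine ⟨μ₀, hμ₀, ?_, fun ν hν => hν.2.2 x⟩
      have hx0 : x = (fun _ : Fin n => (0:ℝ)) := by rw [hx]; rfl
      have hdES0 : ∀ k : Fin n, dES ((k : ℕ) + 1) x = 0 := by
        intro k
        rw [hx0]
        unfold dES
        rw [icc_shift]
        have : ∀ j ∈ Finset.range ((k : ℕ) + 1),
            orderStat (fun _ : Fin n => (0:ℝ)) (j + 1) = 0 := fun j _ => orderStat_zero _
        rw [Finset.sum_congr rfl this]
        simp
      rw [hx0, hρ0]
      symm
      apply Finset.sum_eq_zero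
      intro k _
      rw [← hx0, hdES0 k]
      ring
    · obtain ⟨μ, hμ, hatt⟩ := key x hx
      exact ⟨μ, hμ, hatt.symm, fun ν hν => hν.2.2 x⟩
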